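/- Let f be a polynomial in z and conj(z) such that B₂f = f, where B₂ is the Berezin transform of the Fock space F²₂. Then f is harmonic. -/

import Mathlib

open MeasureTheory

/-- The Berezin transform on the Fock space `F²₂`, with `dA = r dr dθ/(2π)`. -/
noncomputable def berezin2 (f : ℂ → ℂ) (z : ℂ) : ℂ :=
  2 * ((2 * Real.pi)⁻¹ : ℝ) *
    ∫ ξ : ℂ, f (z + ξ) * (Real.exp (-‖ξ‖ ^ 2) : ℂ)


open Finset Real
-- 1D integrability
lemma int1D (n : ℕ) : Integrable (fun x : ℝ => |x| ^ n * rexp (-x ^ 2)) := by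
  have h2n : Integrable (fun x : ℝ => x ^ (2*n) * rexp (-x ^ 2)) := by
    have := integrable_rpow_mul_exp_neg_mul_sq (b := 1) one_pos
      (s := ((2*n : ℕ) : ℝ)) (by exact_mod_cast neg_one_lt_zero.trans_le (Nat.cast_nonneg _))
    simp only [Real.rpow_natCast, neg_mul, one_mul] at this; exact this
  have he1 : Integrable (fun x : ℝ => rexp (-x ^ 2)) := by
    simpa using integrable_exp_neg_mul_sq (b := (1:ℝ)) one_pos
  have hg : Integrable (fun x : ℝ => rexp (-x ^ 2) + x ^ (2*n) * rexp (-x ^ 2)) := he1.add h2n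
  apply hg.mono'
  · exact (Continuous.aestronglyMeasurable (by fun_prop))
  · filter_upwards with x
    have h1 : |x| ^ n ≤ 1 + x ^ (2*n) := by
      have hx2 : x ^ (2*n) = |x| ^ (2*n) := by
        rw [pow_mul, pow_mul, sq_abs]
      rcases le_or_gt |x| 1 with h | h
      · have := pow_le_one₀ (abs_nonneg x) h (n := n)
        nlinarith [pow_nonneg (abs_nonneg x) (2*n), hx2 ▸ pow_nonneg (abs_nonneg x) (2*n)]
      · have h2 : |x| ^ n ≤ |x| ^ (2*n) :=
          pow_le_pow_right₀ h.le (Nat.le_mul_of_pos_left n (by norm_num))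
        rw [hx2]; linarith
    have he : (0:ℝ) < rexp (-x ^ 2) := Real.exp_pos _
    rw [Real.norm_eq_abs, abs_mul, abs_pow, abs_abs, abs_of_pos he]
    nlinarith [pow_nonneg (abs_nonneg x) n]


-- 2D: radial integrability on ℂ
lemma intC (n : ℕ) : Integrable (fun ξ : ℂ => ‖ξ‖ ^ n * rexp (-‖ξ‖ ^ 2)) := by
  rw [← MeasurePreserving.integrable_comp_emb
      (Complex.volume_preserving_equiv_real_prod.symm)
      (Complex.measurableEquivRealProd.symm.measurableEmbedding)]
  have habs : ∀ p : ℝ × ℝ, ‖Complex.measurableEquivRealProd.symm p‖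
      = Real.sqrt (p.1 ^ 2 + p.2 ^ 2) := by
    intro p
    rw [Complex.measurableEquivRealProd_symm_apply]
    rw [Complex.norm_def, Complex.normSq_mk]
    ring_nf
  have hg : Integrable (fun p : ℝ × ℝ =>
      ∑ i ∈ range (n+1), ((n.choose i : ℝ) * (|p.1| ^ i * rexp (-p.1 ^ 2)))
        * (|p.2| ^ (n - i) * rexp (-p.2 ^ 2))) := by
    apply integrable_finset_sum
    intro i _
    exact (((int1D i).const_mul _).mul_prod (int1D (n - i)))
  apply hg.mono'
  · have hc : Continuous fun ξ : ℂ => ‖ξ‖ ^ n * rexp (-‖ξ‖ ^ 2) :=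
      (continuous_norm.pow n).mul
        (Real.continuous_exp.comp (continuous_norm.pow 2).neg)
    exact (hc.measurable.comp Complex.measurableEquivRealProd.symm.measurable).aestronglyMeasurable
  · filter_upwards with p
    have h1 : ‖(Complex.measurableEquivRealProd.symm) p‖ ≤ |p.1| + |p.2| := by
      rw [Complex.measurableEquivRealProd_symm_apply]
      exact (Complex.norm_le_abs_re_add_abs_im _).trans (by simp)
    have h2 : (‖(Complex.measurableEquivRealProd.symm) p‖) ^ 2
        = p.1 ^ 2 + p.2 ^ 2 := by
      rw [habs, Real.sq_sqrt (by positivity)]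
    rw [Function.comp_apply, Real.norm_eq_abs, abs_mul, abs_pow,
      abs_of_nonneg (norm_nonneg _), abs_of_pos (Real.exp_pos _), h2]
    calc ‖(Complex.measurableEquivRealProd.symm) p‖ ^ n * rexp (-(p.1^2+p.2^2))
        ≤ (|p.1| + |p.2|) ^ n * rexp (-(p.1^2+p.2^2)) := by
          gcongr
      _ = ∑ i ∈ range (n+1), ((n.choose i : ℝ) * (|p.1| ^ i * rexp (-p.1 ^ 2)))
          * (|p.2| ^ (n - i) * rexp (-p.2 ^ 2)) := by
          rw [add_pow, Finset.sum_mul]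
          apply Finset.sum_congr rfl
          intro i _
          rw [show -(p.1^2+p.2^2) = (-p.1^2) + (-p.2^2) by ring, Real.exp_add]
          ring


lemma intMono (a b : ℕ) : Integrable (fun ξ : ℂ =>
    ξ ^ a * (starRingEnd ℂ ξ) ^ b * (rexp (-‖ξ‖ ^ 2) : ℂ)) := by
  apply (intC (a + b)).mono'
  · apply Continuous.aestronglyMeasurable
    exact ((continuous_pow a).mul (Complex.continuous_conj.pow b)).mul
      (Complex.continuous_ofReal.comp (Real.continuous_exp.comp (continuous_norm.pow 2).neg))
  · filter_upwards with ξ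
    simp only [norm_mul, norm_pow, map_pow]
    rw [Complex.norm_conj, Complex.norm_real, Real.norm_eq_abs, abs_of_pos (Real.exp_pos _), pow_add]

-- diagonal moment
lemma momentDiag (a : ℕ) :
    ∫ ξ : ℂ, (‖ξ‖ ^ (2 * a) * rexp (-‖ξ‖ ^ 2)) = π * a.factorial := by
  have h := Complex.integral_rpow_mul_exp_neg_rpow (p := 2) (q := ((2*a : ℕ) : ℝ))
    one_le_two (lt_of_lt_of_le (by norm_num) (Nat.cast_nonneg _))
  simp only [Real.rpow_two, Real.rpow_natCast] at h
  rw [h, show (((2*a:ℕ):ℝ) + 2)/2 = ((a:ℝ) + 1) by push_cast; ring,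
    Real.Gamma_nat_eq_factorial]
  ring

lemma conj_circle_exp (t : ℝ) :
    (starRingEnd ℂ) ((Circle.exp t : Circle) : ℂ) = Complex.exp (-(t * Complex.I)) := by
  rw [Circle.coe_exp, ← Complex.exp_conj, map_mul, Complex.conj_I, Complex.conj_ofReal,
    mul_neg]

-- full moment
lemma moment (a b : ℕ) :
    ∫ ξ : ℂ, ξ ^ a * (starRingEnd ℂ ξ) ^ b * (rexp (-‖ξ‖ ^ 2) : ℂ)
      = if a = b then (π : ℂ) * a.factorial else 0 := by
  rcases eq_or_ne a b with rfl | hab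
  · simp only [if_pos rfl]
    have key : ∀ ξ : ℂ, ξ ^ a * (starRingEnd ℂ ξ) ^ a * (rexp (-‖ξ‖ ^ 2) : ℂ)
        = ((‖ξ‖ ^ (2*a) * rexp (-‖ξ‖ ^ 2) : ℝ) : ℂ) := by
      intro ξ
      rw [← mul_pow, Complex.mul_conj, ← Complex.sq_norm]
      push_cast
      rw [← pow_mul]
    rw [integral_congr_ae (Filter.Eventually.of_forall key)]
    rw [show (∫ ξ : ℂ, ((‖ξ‖ ^ (2*a) * rexp (-‖ξ‖ ^ 2) : ℝ) : ℂ))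
        = ((∫ ξ : ℂ, (‖ξ‖ ^ (2*a) * rexp (-‖ξ‖ ^ 2) : ℝ) : ℝ) : ℂ)
      from integral_ofReal, momentDiag]
    push_cast; ring
  · simp only [if_neg hab]
    set α : Circle := Circle.exp (π / ((a:ℝ) - (b:ℝ))) with hα
    have hrot := ((_root_.rotation α).measurePreserving).integral_comp
      (_root_.rotation α).toHomeomorph.measurableEmbedding
      (fun ξ : ℂ => ξ ^ a * (starRingEnd ℂ ξ) ^ b * (rexp (-‖ξ‖ ^ 2) : ℂ))
    have hne : (a:ℝ) - (b:ℝ) ≠ 0 := sub_ne_zero.2 (by exact_mod_cast hab)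
    have hval : ((α : ℂ)) ^ a * ((starRingEnd ℂ) (α : ℂ)) ^ b = -1 := by
      rw [hα, conj_circle_exp, Circle.coe_exp, ← Complex.exp_nat_mul, ← Complex.exp_nat_mul,
        ← Complex.exp_add]
      rw [show (a:ℂ) * ((π / ((a:ℝ) - (b:ℝ)) : ℝ) * Complex.I)
            + (b:ℂ) * -((π / ((a:ℝ) - (b:ℝ)) : ℝ) * Complex.I)
          = (((a:ℝ) - (b:ℝ)) : ℂ) * (π / ((a:ℝ) - (b:ℝ)) : ℝ) * Complex.I by push_cast; ring]
      have : ((((a:ℝ) - (b:ℝ)) : ℂ)) * ((π / ((a:ℝ) - (b:ℝ)) : ℝ) : ℂ) = (π : ℂ) := by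
        have hneC : ((a:ℂ) - (b:ℂ)) ≠ 0 := sub_ne_zero.2 (by exact_mod_cast hab)
        push_cast
        field_simp
      rw [this, Complex.exp_pi_mul_I]
    have heq : ∀ ξ : ℂ,
        (fun ξ : ℂ => ξ ^ a * (starRingEnd ℂ ξ) ^ b * (rexp (-‖ξ‖ ^ 2) : ℂ))
          ((_root_.rotation α) ξ)
        = (-1) * (ξ ^ a * (starRingEnd ℂ ξ) ^ b * (rexp (-‖ξ‖ ^ 2) : ℂ)) := by
      intro ξ
      simp only [rotation_apply]
      have habs : ‖(α : ℂ) * ξ‖ = ‖ξ‖ := by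
        rw [norm_mul, Circle.norm_coe, one_mul]
      rw [habs, map_mul, mul_pow, mul_pow]
      rw [show (α:ℂ)^a * ξ^a * ((starRingEnd ℂ (α:ℂ))^b * (starRingEnd ℂ ξ)^b)
            * (rexp (-‖ξ‖ ^ 2) : ℂ)
          = ((α:ℂ)^a * (starRingEnd ℂ (α:ℂ))^b)
            * (ξ^a * (starRingEnd ℂ ξ)^b * (rexp (-‖ξ‖ ^ 2) : ℂ)) by ring, hval]
    rw [integral_congr_ae (Filter.Eventually.of_forall heq), integral_const_mul] at hrot
    have hI := hrot
    -- hI : -1 * ∫ = ∫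
    have : (2 : ℂ) * ∫ ξ : ℂ, ξ ^ a * (starRingEnd ℂ ξ) ^ b * (rexp (-‖ξ‖ ^ 2) : ℂ) = 0 := by
      linear_combination -hI
    exact (mul_eq_zero.mp this).resolve_left two_ne_zero


-- one-variable polynomial: vanishing function implies zero coefficients
lemma poly1 (M : ℕ) (g : ℕ → ℂ) (h : ∀ z : ℂ, ∑ p ∈ range M, g p * z ^ p = 0) :
    ∀ p, p < M → g p = 0 := by
  intro p hp
  set P : Polynomial ℂ := ∑ q ∈ range M, Polynomial.C (g q) * Polynomial.X ^ q with hP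
  have hev : ∀ z, P.eval z = 0 := by
    intro z
    rw [hP]
    simp only [Polynomial.eval_finset_sum, Polynomial.eval_mul, Polynomial.eval_C,
      Polynomial.eval_pow, Polynomial.eval_X]
    exact h z
  have hP0 : P = 0 := Polynomial.funext (by simpa using hev)
  have : P.coeff p = g p := by
    rw [hP, Polynomial.finset_sum_coeff]
    simp only [Polynomial.coeff_C_mul, Polynomial.coeff_X_pow]
    rw [Finset.sum_eq_single p]
    · simp
    · intro q _ hq; simp [Polynomial.coeff_X_pow, Ne.symm hq]
    · intro hcon; exact absurd (Finset.mem_range.2 hp) hcon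
  rw [hP0] at this
  simpa using this.symm

-- entire function vanishing on ℝ vanishes
lemma ext1 (F : ℂ → ℂ) (hF : Differentiable ℂ F) (h : ∀ x : ℝ, F x = 0) : ∀ z, F z = 0 := by
  have hA : AnalyticOnNhd ℂ F Set.univ := Complex.analyticOnNhd_univ_iff_differentiable.2 hF
  have hfreq : ∃ᶠ z in nhdsWithin (0:ℂ) {(0:ℂ)}ᶜ, F z = 0 := by
    set u : ℕ → ℝ := fun n => ((n:ℝ)+1)⁻¹ with hu
    have htend : Filter.Tendsto (fun n : ℕ => ((u n : ℝ) : ℂ)) Filter.atTop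
        (nhdsWithin (0:ℂ) {(0:ℂ)}ᶜ) := by
      rw [tendsto_nhdsWithin_iff]
      constructor
      · have h1 : Filter.Tendsto u Filter.atTop (nhds 0) :=
          tendsto_one_div_add_atTop_nhds_zero_nat.congr (by intro n; rw [hu, one_div])
        have := (Complex.continuous_ofReal.tendsto 0).comp h1
        simpa [Function.comp_def] using this
      · filter_upwards with n
        simp only [Set.mem_compl_iff, Set.mem_singleton_iff]
        intro hcon
        have h0 : u n = (0:ℝ) := by exact_mod_cast hcon
        have : (0:ℝ) < u n := by rw [hu]; positivity
        simp_all
    exact htend.frequently (Filter.Frequently.of_forall (fun n => h _))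
  have := hA.eqOn_zero_of_preconnected_of_frequently_eq_zero
    isPreconnected_univ (Set.mem_univ (0:ℂ)) hfreq
  intro z; exact this (Set.mem_univ z)

-- independence of monomials z^p conj(z)^q
lemma indep (M : ℕ) (d : ℕ → ℕ → ℂ)
    (h : ∀ z : ℂ, ∑ p ∈ range M, ∑ q ∈ range M,
      d p q * z ^ p * (starRingEnd ℂ z) ^ q = 0) :
    ∀ p, p < M → ∀ q, q < M → d p q = 0 := by
  set S : ℂ → ℂ → ℂ := fun u w =>
    ∑ p ∈ range M, ∑ q ∈ range M, d p q * (u + w * Complex.I) ^ p * (u - w * Complex.I) ^ q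
    with hS
  have hdiff1 : ∀ u : ℂ, Differentiable ℂ (fun w => S u w) := by
    intro u
    apply Differentiable.fun_sum; intro p _
    apply Differentiable.fun_sum; intro q _
    apply Differentiable.mul
    · exact (differentiable_const _).mul ((differentiable_const _).add
        (differentiable_id.mul (differentiable_const _))|>.pow p)
    · exact ((differentiable_id.mul (differentiable_const _)).const_sub u|>.pow q)
  have hdiff2 : ∀ w : ℂ, Differentiable ℂ (fun u => S u w) := by
    intro w
    apply Differentiable.fun_sum; intro p _
    apply Differentiable.fun_sum; intro q _
    apply Differentiable.mul
    · exact (differentiable_const _).mul ((differentiable_id.add_const _).pow p)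
    · exact ((differentiable_id.sub_const _).pow q)
  have hA : ∀ (x : ℝ) (w : ℂ), S x w = 0 := by
    intro x
    apply ext1 _ (hdiff1 x)
    intro y
    have hz : ((x:ℂ) + (y:ℂ) * Complex.I) = Complex.mk x y := by
      exact (Complex.mk_eq_add_mul_I x y).symm
    have hzc : ((x:ℂ) - (y:ℂ) * Complex.I) = starRingEnd ℂ (Complex.mk x y) := by
      rw [← hz]; simp [map_add, Complex.conj_ofReal, map_mul, Complex.conj_I]; ring
    simp only [hS]
    calc ∑ p ∈ range M, ∑ q ∈ range M,
          d p q * ((x:ℂ) + (y:ℂ) * Complex.I) ^ p * ((x:ℂ) - (y:ℂ) * Complex.I) ^ q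
        = ∑ p ∈ range M, ∑ q ∈ range M,
          d p q * (Complex.mk x y) ^ p * (starRingEnd ℂ (Complex.mk x y)) ^ q := by
          rw [hz, hzc]
      _ = 0 := h _
  have hB : ∀ (w u : ℂ), S u w = 0 := by
    intro w
    apply ext1 _ (hdiff2 w)
    intro x
    exact hA x w
  have hUV : ∀ y₁ y₂ : ℂ, ∑ p ∈ range M, ∑ q ∈ range M, d p q * y₁ ^ p * y₂ ^ q = 0 := by
    intro y₁ y₂
    have := hB ((y₁ - y₂) / (2 * Complex.I)) ((y₁ + y₂) / 2)
    simp only [hS] at this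
    have h1 : (y₁ + y₂) / 2 + (y₁ - y₂) / (2 * Complex.I) * Complex.I = y₁ := by
      field_simp
      ring
    have h2 : (y₁ + y₂) / 2 - (y₁ - y₂) / (2 * Complex.I) * Complex.I = y₂ := by
      field_simp
      ring
    rw [h1, h2] at this
    exact this
  intro p hp q hq
  have h1 : ∀ y₂ : ℂ, ∑ q ∈ range M, d p q * y₂ ^ q = 0 := by
    intro y₂
    refine poly1 M (fun p' => ∑ q ∈ range M, d p' q * y₂ ^ q) ?_ p hp
    intro y₁
    rw [show ∑ p' ∈ range M, (∑ q ∈ range M, d p' q * y₂ ^ q) * y₁ ^ p'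
        = ∑ p' ∈ range M, ∑ q ∈ range M, d p' q * y₁ ^ p' * y₂ ^ q by
      apply Finset.sum_congr rfl; intro p' _; rw [Finset.sum_mul];
      apply Finset.sum_congr rfl; intro q' _; ring]
    exact hUV y₁ y₂
  exact poly1 M (fun q' => d p q') h1 q hq

lemma iteAndSum (s : Finset ℕ) (P : Prop) [Decidable P] (Q : ℕ → Prop) [DecidablePred Q]
    (X : ℕ → ℂ) :
    ∑ k ∈ s, (if P ∧ Q k then X k else 0) = if P then ∑ k ∈ s, (if Q k then X k else 0) else 0 := by
  split_ifs with h
  · exact Finset.sum_congr rfl fun k _ => by simp [h]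
  · exact Finset.sum_eq_zero fun k _ => by simp [h]

lemma shiftSum (N a : ℕ) (F : ℕ → ℂ) :
    ∑ j ∈ Finset.range N, (if a ≤ j then F j else 0)
      = ∑ p ∈ Finset.range N, (if p < N - a then F (a + p) else 0) := by
  calc ∑ j ∈ Finset.range N, (if a ≤ j then F j else 0)
      = ∑ j ∈ Finset.Ico a N, (if a ≤ j then F j else 0) := by
        refine (Finset.sum_subset ?_ ?_).symm
        · rw [Finset.range_eq_Ico]; exact Finset.Ico_subset_Ico (Nat.zero_le a) le_rfl
        · intro x hx hnx
          rw [Finset.mem_range] at hx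
          rw [Finset.mem_Ico] at hnx
          exact if_neg (by omega)
    _ = ∑ j ∈ Finset.Ico a N, F j :=
        Finset.sum_congr rfl fun j hj => if_pos (Finset.mem_Ico.1 hj).1
    _ = ∑ p ∈ Finset.range (N - a), F (a + p) := by rw [Finset.sum_Ico_eq_sum_range]
    _ = ∑ p ∈ Finset.range (N - a), (if p < N - a then F (a + p) else 0) :=
        Finset.sum_congr rfl fun p hp => (if_pos (Finset.mem_range.1 hp)).symm
    _ = ∑ p ∈ Finset.range N, (if p < N - a then F (a + p) else 0) := by
        refine Finset.sum_subset (Finset.range_subset_range.2 (Nat.sub_le N a)) ?_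
        intro x hx hnx
        rw [Finset.mem_range] at hx hnx
        exact if_neg (by omega)


lemma sumIteConst (s : Finset ℕ) (P : Prop) [Decidable P] (X : ℕ → ℂ) :
    ∑ k ∈ s, (if P then X k else 0) = if P then ∑ k ∈ s, X k else 0 := by
  split_ifs <;> simp

theorem fixed_points_of_berezin2_are_harmonic (f : ℂ → ℂ)
    (hpoly : ∃ (N : ℕ) (c : ℕ → ℕ → ℂ), ∀ z, f z =
      ∑ j ∈ Finset.range N, ∑ k ∈ Finset.range N,
        c j k * z ^ j * (starRingEnd ℂ z) ^ k)
    (hfix : ∀ z, berezin2 f z = f z) :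
    ∃ p q : Polynomial ℂ, ∀ z, f z = p.eval z + q.eval (starRingEnd ℂ z) := by
  obtain ⟨N, c, hc⟩ := hpoly
  rcases Nat.eq_zero_or_pos N with hN | hN
  · subst hN
    exact ⟨0, 0, fun z => by simpa using hc z⟩
  have hπ : (2:ℂ) * (((2 * Real.pi)⁻¹ : ℝ) : ℂ) * (π:ℂ) = 1 := by
    have hπ0 : (π:ℂ) ≠ 0 := by exact_mod_cast Real.pi_ne_zero
    push_cast
    field_simp
  -- step 1 : compute the Berezin transform of f
  have hber : ∀ z : ℂ, berezin2 f z =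
      ∑ j ∈ range N, ∑ k ∈ range N, ∑ a ∈ range (j+1),
        (if a ≤ k then ((j.choose a : ℂ) * (k.choose a : ℂ) * (a.factorial : ℂ)) * c j k
            * z ^ (j-a) * (starRingEnd ℂ z) ^ (k-a) else 0) := by
    intro z
    have h1 : ∀ ξ : ℂ, f (z + ξ) * (rexp (-‖ξ‖ ^ 2) : ℂ)
        = ∑ j ∈ range N, ∑ k ∈ range N, ∑ a ∈ range (j+1), ∑ b ∈ range (k+1),
          (((j.choose a : ℂ)) * ((k.choose b : ℂ)) * c j k * z ^ (j-a)
              * (starRingEnd ℂ z) ^ (k-b))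
            * (ξ ^ a * (starRingEnd ℂ ξ) ^ b * (rexp (-‖ξ‖ ^ 2) : ℂ)) := by
      intro ξ
      rw [hc (z + ξ)]
      simp only [show z + ξ = ξ + z from add_comm z ξ, map_add, add_pow,
        Finset.sum_mul, Finset.mul_sum]
      refine Finset.sum_congr rfl fun j _ => Finset.sum_congr rfl fun k _ => ?_
      rw [Finset.sum_comm]
      refine Finset.sum_congr rfl fun a _ => Finset.sum_congr rfl fun b _ => ?_
      ring
    have hI2 : ∀ (w : ℂ) (a b : ℕ), Integrable (fun ξ : ℂ =>
        w * (ξ ^ a * (starRingEnd ℂ ξ) ^ b * (rexp (-‖ξ‖ ^ 2) : ℂ))) :=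
      fun w a b => (intMono a b).const_mul w
    have hI3 : ∀ (j k a : ℕ), Integrable (fun ξ : ℂ => ∑ b ∈ range (k+1),
        (((j.choose a : ℂ)) * ((k.choose b : ℂ)) * c j k * z ^ (j-a)
            * (starRingEnd ℂ z) ^ (k-b))
          * (ξ ^ a * (starRingEnd ℂ ξ) ^ b * (rexp (-‖ξ‖ ^ 2) : ℂ))) :=
      fun j k a => integrable_finset_sum _ (fun b _ => hI2 _ a b)
    have hI4 : ∀ (j k : ℕ), Integrable (fun ξ : ℂ => ∑ a ∈ range (j+1), ∑ b ∈ range (k+1),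
        (((j.choose a : ℂ)) * ((k.choose b : ℂ)) * c j k * z ^ (j-a)
            * (starRingEnd ℂ z) ^ (k-b))
          * (ξ ^ a * (starRingEnd ℂ ξ) ^ b * (rexp (-‖ξ‖ ^ 2) : ℂ))) :=
      fun j k => integrable_finset_sum _ (fun a _ => hI3 j k a)
    have hI5 : ∀ (j : ℕ), Integrable (fun ξ : ℂ => ∑ k ∈ range N, ∑ a ∈ range (j+1),
        ∑ b ∈ range (k+1),
        (((j.choose a : ℂ)) * ((k.choose b : ℂ)) * c j k * z ^ (j-a)
            * (starRingEnd ℂ z) ^ (k-b))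
          * (ξ ^ a * (starRingEnd ℂ ξ) ^ b * (rexp (-‖ξ‖ ^ 2) : ℂ))) :=
      fun j => integrable_finset_sum _ (fun k _ => hI4 j k)
    unfold berezin2
    rw [integral_congr_ae (Filter.Eventually.of_forall h1)]
    rw [integral_finset_sum _ (fun j _ => hI5 j)]
    have hin : ∀ j ∈ range N,
        (∫ ξ : ℂ, ∑ k ∈ range N, ∑ a ∈ range (j+1), ∑ b ∈ range (k+1),
          (((j.choose a : ℂ)) * ((k.choose b : ℂ)) * c j k * z ^ (j-a)
              * (starRingEnd ℂ z) ^ (k-b))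
            * (ξ ^ a * (starRingEnd ℂ ξ) ^ b * (rexp (-‖ξ‖ ^ 2) : ℂ)))
        = ∑ k ∈ range N, ∑ a ∈ range (j+1), ∑ b ∈ range (k+1),
          (((j.choose a : ℂ)) * ((k.choose b : ℂ)) * c j k * z ^ (j-a)
              * (starRingEnd ℂ z) ^ (k-b))
            * (if a = b then (π : ℂ) * a.factorial else 0) := by
      intro j _
      rw [integral_finset_sum _ (fun k _ => hI4 j k)]
      refine Finset.sum_congr rfl fun k _ => ?_
      rw [integral_finset_sum _ (fun a _ => hI3 j k a)]
      refine Finset.sum_congr rfl fun a _ => ?_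
      rw [integral_finset_sum _ (fun b _ => hI2 _ a b)]
      refine Finset.sum_congr rfl fun b _ => ?_
      rw [integral_const_mul, moment a b]
    rw [Finset.sum_congr rfl hin]
    simp only [mul_ite, mul_zero, Finset.sum_ite_eq, Finset.mem_range, Nat.lt_succ_iff]
    simp only [Finset.mul_sum, mul_ite, mul_zero]
    refine Finset.sum_congr rfl fun j _ => Finset.sum_congr rfl fun k _ => ?_
    refine Finset.sum_congr rfl fun a _ => ?_
    split_ifs with h
    · linear_combination ((j.choose a : ℂ) * (k.choose a : ℂ) * c j k * z ^ (j-a)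
        * (starRingEnd ℂ z) ^ (k-a) * (a.factorial : ℂ)) * hπ
    · rfl
  -- step 2 : split off the a = 0 term
  have hsplit : ∀ z : ℂ,
      (∑ j ∈ range N, ∑ k ∈ range N, ∑ a ∈ range (j+1),
        (if a ≤ k then ((j.choose a : ℂ) * (k.choose a : ℂ) * (a.factorial : ℂ)) * c j k
            * z ^ (j-a) * (starRingEnd ℂ z) ^ (k-a) else 0))
      = f z + ∑ j ∈ range N, ∑ k ∈ range N, ∑ a ∈ Finset.Icc 1 N,
        (if a ≤ j ∧ a ≤ k then ((j.choose a : ℂ) * (k.choose a : ℂ) * (a.factorial : ℂ)) * c j k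
            * z ^ (j-a) * (starRingEnd ℂ z) ^ (k-a) else 0) := by
    intro z
    rw [hc z, ← Finset.sum_add_distrib]
    refine Finset.sum_congr rfl fun j hj => ?_
    rw [← Finset.sum_add_distrib]
    refine Finset.sum_congr rfl fun k hk => ?_
    rw [Finset.mem_range] at hj hk
    have h0 : (0:ℕ) ∈ range (j+1) := by simp
    rw [← Finset.add_sum_erase _ _ h0]
    congr 1
    · rw [if_pos (Nat.zero_le k)]
      simp
    · have herase : (range (j+1)).erase 0 = Finset.Icc 1 j := by
        ext x
        simp only [Finset.mem_erase, Finset.mem_range, Finset.mem_Icc]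
        omega
      rw [herase]
      calc ∑ a ∈ Finset.Icc 1 j,
            (if a ≤ k then ((j.choose a : ℂ) * (k.choose a : ℂ) * (a.factorial : ℂ)) * c j k
              * z ^ (j-a) * (starRingEnd ℂ z) ^ (k-a) else 0)
          = ∑ a ∈ Finset.Icc 1 j,
            (if a ≤ j ∧ a ≤ k then ((j.choose a : ℂ) * (k.choose a : ℂ) * (a.factorial : ℂ)) * c j k
              * z ^ (j-a) * (starRingEnd ℂ z) ^ (k-a) else 0) := by
            refine Finset.sum_congr rfl fun a ha => ?_
            rw [Finset.mem_Icc] at ha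
            by_cases hak : a ≤ k
            · rw [if_pos hak, if_pos ⟨ha.2, hak⟩]
            · rw [if_neg hak, if_neg (by tauto)]
        _ = ∑ a ∈ Finset.Icc 1 N,
            (if a ≤ j ∧ a ≤ k then ((j.choose a : ℂ) * (k.choose a : ℂ) * (a.factorial : ℂ)) * c j k
              * z ^ (j-a) * (starRingEnd ℂ z) ^ (k-a) else 0) := by
            refine Finset.sum_subset (Finset.Icc_subset_Icc le_rfl (by omega)) ?_
            intro x hx hnx
            rw [Finset.mem_Icc] at hx hnx
            exact if_neg (by omega)
  have hG : ∀ z : ℂ, ∑ j ∈ range N, ∑ k ∈ range N, ∑ a ∈ Finset.Icc 1 N,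
      (if a ≤ j ∧ a ≤ k then ((j.choose a : ℂ) * (k.choose a : ℂ) * (a.factorial : ℂ)) * c j k
          * z ^ (j-a) * (starRingEnd ℂ z) ^ (k-a) else 0) = 0 := by
    intro z
    have h1 := hfix z
    rw [hber z, hsplit z] at h1
    exact add_eq_left.mp h1
  -- step 3 : reindex the vanishing sum into monomial form
  have h5 : ∀ z : ℂ, ∑ j ∈ range N, ∑ k ∈ range N, ∑ a ∈ Finset.Icc 1 N,
      (if a ≤ j ∧ a ≤ k then ((j.choose a : ℂ) * (k.choose a : ℂ) * (a.factorial : ℂ)) * c j k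
          * z ^ (j-a) * (starRingEnd ℂ z) ^ (k-a) else 0)
      = ∑ p ∈ range N, ∑ q ∈ range N,
          (∑ a ∈ Finset.Icc 1 N, (if p < N - a ∧ q < N - a then
            (((a+p).choose a : ℂ) * ((a+q).choose a : ℂ) * (a.factorial : ℂ)) * c (a+p) (a+q)
            else 0)) * z ^ p * (starRingEnd ℂ z) ^ q := by
    intro z
    calc ∑ j ∈ range N, ∑ k ∈ range N, ∑ a ∈ Finset.Icc 1 N,
        (if a ≤ j ∧ a ≤ k then ((j.choose a : ℂ) * (k.choose a : ℂ) * (a.factorial : ℂ)) * c j k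
            * z ^ (j-a) * (starRingEnd ℂ z) ^ (k-a) else 0)
        = ∑ a ∈ Finset.Icc 1 N, ∑ j ∈ range N, ∑ k ∈ range N,
          (if a ≤ j ∧ a ≤ k then ((j.choose a : ℂ) * (k.choose a : ℂ) * (a.factorial : ℂ)) * c j k
              * z ^ (j-a) * (starRingEnd ℂ z) ^ (k-a) else 0) := by
          rw [show (∑ j ∈ range N, ∑ k ∈ range N, ∑ a ∈ Finset.Icc 1 N,
              (if a ≤ j ∧ a ≤ k then ((j.choose a : ℂ) * (k.choose a : ℂ) * (a.factorial : ℂ))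
                * c j k * z ^ (j-a) * (starRingEnd ℂ z) ^ (k-a) else 0))
            = ∑ j ∈ range N, ∑ a ∈ Finset.Icc 1 N, ∑ k ∈ range N,
              (if a ≤ j ∧ a ≤ k then ((j.choose a : ℂ) * (k.choose a : ℂ) * (a.factorial : ℂ))
                * c j k * z ^ (j-a) * (starRingEnd ℂ z) ^ (k-a) else 0)
            from Finset.sum_congr rfl fun j _ => Finset.sum_comm]
          exact Finset.sum_comm
      _ = ∑ a ∈ Finset.Icc 1 N, ∑ p ∈ range N, ∑ q ∈ range N,
          (if p < N - a ∧ q < N - a then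
            (((a+p).choose a : ℂ) * ((a+q).choose a : ℂ) * (a.factorial : ℂ)) * c (a+p) (a+q)
              * z ^ p * (starRingEnd ℂ z) ^ q else 0) := by
          refine Finset.sum_congr rfl fun a _ => ?_
          rw [show (∑ j ∈ range N, ∑ k ∈ range N,
              (if a ≤ j ∧ a ≤ k then ((j.choose a : ℂ) * (k.choose a : ℂ) * (a.factorial : ℂ))
                * c j k * z ^ (j-a) * (starRingEnd ℂ z) ^ (k-a) else 0))
            = ∑ j ∈ range N, (if a ≤ j then (∑ k ∈ range N,
              (if a ≤ k then ((j.choose a : ℂ) * (k.choose a : ℂ) * (a.factorial : ℂ))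
                * c j k * z ^ (j-a) * (starRingEnd ℂ z) ^ (k-a) else 0)) else 0)
            from Finset.sum_congr rfl fun j _ => iteAndSum _ _ _ _]
          rw [shiftSum]
          refine Finset.sum_congr rfl fun p _ => ?_
          rw [show (if p < N - a then (∑ k ∈ range N,
              (if a ≤ k then (((a+p).choose a : ℂ) * (k.choose a : ℂ) * (a.factorial : ℂ))
                * c (a+p) k * z ^ ((a+p)-a) * (starRingEnd ℂ z) ^ (k-a) else 0)) else 0)
            = (if p < N - a then (∑ q ∈ range N,
              (if q < N - a then (((a+p).choose a : ℂ) * (((a+q).choose a : ℂ)) * (a.factorial : ℂ))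
                * c (a+p) (a+q) * z ^ ((a+p)-a) * (starRingEnd ℂ z) ^ ((a+q)-a) else 0)) else 0)
            from by split_ifs with h
                    exacts [shiftSum N a _, rfl]]
          rw [← iteAndSum]
          simp only [Nat.add_sub_cancel_left]
      _ = ∑ p ∈ range N, ∑ q ∈ range N, ∑ a ∈ Finset.Icc 1 N,
          (if p < N - a ∧ q < N - a then
            (((a+p).choose a : ℂ) * ((a+q).choose a : ℂ) * (a.factorial : ℂ)) * c (a+p) (a+q)
              * z ^ p * (starRingEnd ℂ z) ^ q else 0) := by
          rw [Finset.sum_comm]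
          exact Finset.sum_congr rfl fun p _ => Finset.sum_comm
      _ = ∑ p ∈ range N, ∑ q ∈ range N,
          (∑ a ∈ Finset.Icc 1 N, (if p < N - a ∧ q < N - a then
            (((a+p).choose a : ℂ) * ((a+q).choose a : ℂ) * (a.factorial : ℂ)) * c (a+p) (a+q)
            else 0)) * z ^ p * (starRingEnd ℂ z) ^ q := by
          refine Finset.sum_congr rfl fun p _ => Finset.sum_congr rfl fun q _ => ?_
          rw [Finset.sum_mul, Finset.sum_mul]
          refine Finset.sum_congr rfl fun a _ => ?_
          simp only [ite_mul, zero_mul]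
  have hez : ∀ z : ℂ, ∑ p ∈ range N, ∑ q ∈ range N,
      (fun p q => ∑ a ∈ Finset.Icc 1 N, (if p < N - a ∧ q < N - a then
        (((a+p).choose a : ℂ) * ((a+q).choose a : ℂ) * (a.factorial : ℂ)) * c (a+p) (a+q)
        else 0)) p q * z ^ p * (starRingEnd ℂ z) ^ q = 0 :=
    fun z => (h5 z).symm.trans (hG z)
  have he0 := indep N _ hez
  -- step 4 : downward induction kills mixed coefficients
  have hkey : ∀ m j k, 1 ≤ j → 1 ≤ k → j < N → k < N → 2*N - (j+k) ≤ m → c j k = 0 := by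
    intro m
    induction m with
    | zero => intro j k h1 h2 h3 h4 h5'; omega
    | succ m ih =>
      intro j k h1 h2 h3 h4 h5'
      have hE := he0 (j-1) (by omega) (k-1) (by omega)
      have h1mem : (1:ℕ) ∈ Finset.Icc 1 N := by
        rw [Finset.mem_Icc]; omega
      rw [← Finset.add_sum_erase _ _ h1mem] at hE
      have hj' : 1 + (j-1) = j := by omega
      have hk' : 1 + (k-1) = k := by omega
      rw [hj', hk'] at hE
      rw [if_pos ⟨by omega, by omega⟩] at hE
      have hrest : ∑ a ∈ (Finset.Icc 1 N).erase 1, (if (j-1) < N - a ∧ (k-1) < N - a then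
          (((a+(j-1)).choose a : ℂ) * ((a+(k-1)).choose a : ℂ) * (a.factorial : ℂ))
            * c (a+(j-1)) (a+(k-1)) else 0) = 0 := by
        refine Finset.sum_eq_zero fun a ha => ?_
        rw [Finset.mem_erase, Finset.mem_Icc] at ha
        split_ifs with hcond
        · rw [ih (a+(j-1)) (a+(k-1)) (by omega) (by omega) (by omega) (by omega) (by omega),
            mul_zero]
        · rfl
      rw [hrest, add_zero, Nat.choose_one_right, Nat.choose_one_right] at hE
      simp only [Nat.factorial_one, Nat.cast_one, mul_one] at hE
      have hjne : (j:ℂ) ≠ 0 := Nat.cast_ne_zero.2 (by omega)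
      have hkne : (k:ℂ) ≠ 0 := Nat.cast_ne_zero.2 (by omega)
      rcases mul_eq_zero.mp hE with h | h
      · rcases mul_eq_zero.mp h with h' | h'
        · exact absurd h' hjne
        · exact absurd h' hkne
      · exact h
  -- step 5 : assemble the polynomials
  refine ⟨∑ j ∈ range N, Polynomial.C (c j 0) * Polynomial.X ^ j,
          ∑ k ∈ range N, Polynomial.C (if k = 0 then 0 else c 0 k) * Polynomial.X ^ k, ?_⟩
  intro z
  rw [hc z, Polynomial.eval_finset_sum, Polynomial.eval_finset_sum]
  simp only [Polynomial.eval_mul, Polynomial.eval_C, Polynomial.eval_pow, Polynomial.eval_X]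
  calc ∑ j ∈ range N, ∑ k ∈ range N, c j k * z ^ j * (starRingEnd ℂ z) ^ k
      = ∑ j ∈ range N, ∑ k ∈ range N, ((if k = 0 then c j 0 * z ^ j else 0)
          + (if j = 0 then (if k = 0 then 0 else c 0 k * (starRingEnd ℂ z) ^ k) else 0)) := by
        refine Finset.sum_congr rfl fun j hj => Finset.sum_congr rfl fun k hk => ?_
        rw [Finset.mem_range] at hj hk
        rcases Nat.eq_zero_or_pos k with rfl | hk1
        · simp
        rcases Nat.eq_zero_or_pos j with rfl | hj1
        · simp [hk1.ne']
        · rw [hkey (2*N) j k (by omega) (by omega) hj hk (by omega)]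
          simp [hk1.ne', hj1.ne']
    _ = (∑ j ∈ range N, c j 0 * z ^ j)
        + ∑ k ∈ range N, (if k = 0 then 0 else c 0 k) * (starRingEnd ℂ z) ^ k := by
        simp only [Finset.sum_add_distrib]
        congr 1
        · refine Finset.sum_congr rfl fun j _ => ?_
          rw [Finset.sum_ite_eq' (range N) 0 (fun _ => c j 0 * z ^ j),
            if_pos (Finset.mem_range.2 hN)]
        · rw [show (∑ j ∈ range N, ∑ k ∈ range N,
              (if j = 0 then (if k = 0 then 0 else c 0 k * (starRingEnd ℂ z) ^ k) else 0))
            = ∑ j ∈ range N, (if j = 0 then (∑ k ∈ range N,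
              (if k = 0 then 0 else c 0 k * (starRingEnd ℂ z) ^ k)) else 0)
            from Finset.sum_congr rfl fun j _ => sumIteConst _ _ _]
          rw [Finset.sum_ite_eq' (range N) 0
            (fun _ => ∑ k ∈ range N, (if k = 0 then 0 else c 0 k * (starRingEnd ℂ z) ^ k)),
            if_pos (Finset.mem_range.2 hN)]
          refine Finset.sum_congr rfl fun k _ => ?_
          simp only [ite_mul, zero_mul]
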